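/- Let f : ℝ → ℝ be integrable on (0,∞) and satisfy ∬_{(0,∞)×(0,∞)} min(x,y) |f(x)| |f(y)| dx dy < ∞. Then ∬_{(0,∞)×(0,∞)} f(x) f(y) min(x,y) dx dy = ∫_0^∞ (∫_z^∞ f(x) dx)² dz. -/

import Mathlib

open MeasureTheory ENNReal

private lemma ind_mul_eq (f : ℝ → ℝ) (x y z : ℝ) :
    (Set.Ioi z).indicator f x * (Set.Ioi z).indicator f y
      = (Set.Iio (min x y)).indicator (fun _ => f x * f y) z := by
  by_cases hx : z < x <;> by_cases hy : z < y <;>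
    simp [Set.indicator_apply, lt_min_iff, hx, hy]

/-- If `f` is integrable on `(0,∞)` and
`∬_{(0,∞)²} min(x,y) |f(x)| |f(y)| dx dy < ∞`, then
`∬_{(0,∞)²} f(x) f(y) min(x,y) dx dy = ∫_0^∞ (∫_z^∞ f)² dz`. -/
theorem stmt_2 (f : ℝ → ℝ) (hf : Measurable f)
    (hint : IntegrableOn f (Set.Ioi (0:ℝ)))
    (hfin : (∫⁻ x in Set.Ioi (0:ℝ), ∫⁻ y in Set.Ioi (0:ℝ),
        ENNReal.ofReal (min x y * |f x| * |f y|)) < ⊤) :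
    (∫ x in Set.Ioi (0:ℝ), ∫ y in Set.Ioi (0:ℝ), f x * f y * min x y) =
      ∫ z in Set.Ioi (0:ℝ), (∫ x in Set.Ioi z, f x) ^ 2 := by
  set μ : Measure ℝ := volume.restrict (Set.Ioi (0:ℝ)) with hμ
  -- measurability facts
  have hind : Measurable (fun p : ℝ × ℝ => (Set.Ioi p.2).indicator f p.1) := by
    have h : (fun p : ℝ × ℝ => (Set.Ioi p.2).indicator f p.1)
        = fun p => if p.2 < p.1 then f p.1 else 0 := by
      funext p; simp [Set.indicator_apply]
    rw [h]
    exact Measurable.ite (measurableSet_lt measurable_snd measurable_fst)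
      (hf.comp measurable_fst) measurable_const
  have hG : Measurable (fun q : (ℝ × ℝ) × ℝ =>
      (Set.Ioi q.2).indicator f q.1.1 * (Set.Ioi q.2).indicator f q.1.2) :=
    (hind.comp (measurable_fst.fst.prodMk measurable_snd)).mul
      (hind.comp (measurable_fst.snd.prodMk measurable_snd))
  have hF : Measurable (fun p : ℝ × ℝ => f p.1 * f p.2 * min p.1 p.2) :=
    ((hf.comp measurable_fst).mul (hf.comp measurable_snd)).mul
      (measurable_fst.min measurable_snd)
  have hM : Measurable (fun p : ℝ × ℝ => ENNReal.ofReal (min p.1 p.2 * |f p.1| * |f p.2|)) :=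
    ENNReal.measurable_ofReal.comp
      (((measurable_fst.min measurable_snd).mul (hf.comp measurable_fst).abs).mul
        (hf.comp measurable_snd).abs)
  -- pointwise z-integrals
  have hlint : ∀ x y : ℝ, 0 < x → 0 < y →
      (∫⁻ z, ENNReal.ofReal ‖(Set.Ioi z).indicator f x * (Set.Ioi z).indicator f y‖ ∂μ)
        = ENNReal.ofReal (min x y * |f x| * |f y|) := by
    intro x y hx hy
    have h1 : ∀ z, ENNReal.ofReal ‖(Set.Ioi z).indicator f x * (Set.Ioi z).indicator f y‖
        = (Set.Iio (min x y)).indicator (fun _ => ENNReal.ofReal (|f x| * |f y|)) z := by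
      intro z
      rw [ind_mul_eq]
      by_cases h : z < min x y <;>
        simp [Set.indicator_apply, h, abs_mul, Real.norm_eq_abs]
    simp only [h1]
    rw [lintegral_indicator measurableSet_Iio, setLIntegral_const, hμ,
      Measure.restrict_apply measurableSet_Iio, Set.Iio_inter_Ioi, Real.volume_Ioo,
      ← ENNReal.ofReal_mul (by positivity)]
    congr 1
    ring
  have hint2 : ∀ x y : ℝ, 0 < x → 0 < y →
      (∫ z, (Set.Ioi z).indicator f x * (Set.Ioi z).indicator f y ∂μ)
        = f x * f y * min x y := by
    intro x y hx hy
    simp only [ind_mul_eq]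
    have hm : (0:ℝ) ≤ min x y - 0 := by
      rw [sub_zero]; exact le_min hx.le hy.le
    rw [integral_indicator measurableSet_Iio, setIntegral_const, hμ, measureReal_def,
      Measure.restrict_apply measurableSet_Iio, Set.Iio_inter_Ioi, Real.volume_Ioo,
      ENNReal.toReal_ofReal hm, smul_eq_mul]
    ring
  -- a.e. membership in the product
  have hae_prod : ∀ᵐ p ∂(μ.prod μ), p ∈ Set.Ioi (0:ℝ) ×ˢ Set.Ioi (0:ℝ) := by
    rw [hμ, Measure.prod_restrict]
    exact ae_restrict_mem (measurableSet_Ioi.prod measurableSet_Ioi)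
  -- integrability of F on the product
  have hFint : Integrable (fun p : ℝ × ℝ => f p.1 * f p.2 * min p.1 p.2) (μ.prod μ) := by
    refine ⟨hF.aestronglyMeasurable, ?_⟩
    rw [hasFiniteIntegral_iff_norm,
      lintegral_prod _ hF.norm.ennreal_ofReal.aemeasurable]
    have hinner : ∀ᵐ x ∂μ, (∫⁻ y, ENNReal.ofReal ‖f x * f y * min x y‖ ∂μ)
        = ∫⁻ y, ENNReal.ofReal (min x y * |f x| * |f y|) ∂μ := by
      filter_upwards [ae_restrict_mem measurableSet_Ioi] with x hx
      refine lintegral_congr_ae ?_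
      filter_upwards [ae_restrict_mem measurableSet_Ioi] with y hy
      rw [Real.norm_eq_abs, abs_mul, abs_mul, abs_of_pos (show (0:ℝ) < min x y from lt_min hx hy)]
      congr 1
      ring
    calc (∫⁻ x, ∫⁻ y, ENNReal.ofReal ‖f x * f y * min x y‖ ∂μ ∂μ)
        = ∫⁻ x, ∫⁻ y, ENNReal.ofReal (min x y * |f x| * |f y|) ∂μ ∂μ :=
          lintegral_congr_ae hinner
      _ < ⊤ := hfin
  -- integrability of the triple integrand
  have hGint : Integrable (fun q : (ℝ × ℝ) × ℝ =>
      (Set.Ioi q.2).indicator f q.1.1 * (Set.Ioi q.2).indicator f q.1.2)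
      ((μ.prod μ).prod μ) := by
    refine ⟨hG.aestronglyMeasurable, ?_⟩
    rw [hasFiniteIntegral_iff_norm,
      lintegral_prod _ hG.norm.ennreal_ofReal.aemeasurable]
    have h1 : ∀ᵐ p ∂(μ.prod μ),
        (∫⁻ z, ENNReal.ofReal ‖(Set.Ioi z).indicator f p.1 * (Set.Ioi z).indicator f p.2‖ ∂μ)
          = ENNReal.ofReal (min p.1 p.2 * |f p.1| * |f p.2|) := by
      filter_upwards [hae_prod] with p hp
      exact hlint p.1 p.2 hp.1 hp.2
    rw [lintegral_congr_ae h1]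
    calc (∫⁻ p, ENNReal.ofReal (min p.1 p.2 * |f p.1| * |f p.2|) ∂μ.prod μ)
        = ∫⁻ x, ∫⁻ y, ENNReal.ofReal (min x y * |f x| * |f y|) ∂μ ∂μ :=
          lintegral_prod _ hM.aemeasurable
      _ < ⊤ := hfin
  -- main computation
  calc (∫ x, ∫ y, f x * f y * min x y ∂μ ∂μ)
      = ∫ p : ℝ × ℝ, f p.1 * f p.2 * min p.1 p.2 ∂(μ.prod μ) :=
        (integral_prod _ hFint).symm
    _ = ∫ p : ℝ × ℝ, ∫ z, (Set.Ioi z).indicator f p.1 * (Set.Ioi z).indicator f p.2 ∂μ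
          ∂(μ.prod μ) := by
        refine integral_congr_ae ?_
        filter_upwards [hae_prod] with p hp
        exact (hint2 p.1 p.2 hp.1 hp.2).symm
    _ = ∫ z, ∫ p : ℝ × ℝ, (Set.Ioi z).indicator f p.1 * (Set.Ioi z).indicator f p.2
          ∂(μ.prod μ) ∂μ :=
        integral_integral_swap (f := fun (p : ℝ × ℝ) (z : ℝ) =>
          (Set.Ioi z).indicator f p.1 * (Set.Ioi z).indicator f p.2) hGint
    _ = ∫ z, (∫ x, (Set.Ioi z).indicator f x ∂μ) ^ 2 ∂μ := by
        refine integral_congr_ae (Filter.Eventually.of_forall fun z => ?_)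
        show (∫ p : ℝ × ℝ, (Set.Ioi z).indicator f p.1 * (Set.Ioi z).indicator f p.2 ∂μ.prod μ)
          = (∫ x, (Set.Ioi z).indicator f x ∂μ) ^ 2
        rw [integral_prod_mul]
        ring
    _ = ∫ z in Set.Ioi (0:ℝ), (∫ x in Set.Ioi z, f x) ^ 2 := by
        refine integral_congr_ae ?_
        filter_upwards [ae_restrict_mem measurableSet_Ioi] with z hz
        congr 1
        rw [integral_indicator measurableSet_Ioi, hμ,
          Measure.restrict_restrict measurableSet_Ioi,
          Set.inter_eq_left.mpr (Set.Ioi_subset_Ioi hz.le)]
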